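/- arXiv:2411.15781 — 6 statements merged into one kernel-verified Lean document; each statement's English description precedes it below -/
import Mathlib

section
/- If α·a·F(N)·(1 − F(N)) > c, then O'(n) > 0 for all n ∈ [N̂, N], O is strictly monotone increasing on [N̂, N], and its unique maximizer on [N̂, N] is n* = N. -/
/-- If `α·a·F(N)·(1 − F(N)) > c`, then `O'(n) > 0` for all
`n ∈ [N̂, N]`, `O` is strictly monotone increasing on `[N̂, N]`, and its unique
maximizer on `[N̂, N]` is `n* = N`. Here `O(n) = α·F(n) − c·n + Γ`,
`F(x) = 1/(1 + exp(−a·(x − b)))`, `a > 0`, `α > 0`, `b < N̂ < N`. -/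
theorem deriv_pos_maximizer_at_N (a b α c Γ Nhat N : ℝ)
    (ha : 0 < a) (hα : 0 < α) (hbN : b < Nhat) (hNN : Nhat < N)
    (F O : ℝ → ℝ)
    (hF : ∀ x, F x = 1 / (1 + Real.exp (-a * (x - b))))
    (hO : ∀ n, O n = α * F n - c * n + Γ)
    (hc : c < α * a * F N * (1 - F N)) :
    (∀ n ∈ Set.Icc Nhat N, 0 < deriv O n) ∧
      StrictMonoOn O (Set.Icc Nhat N) ∧
      ∀ n ∈ Set.Icc Nhat N, n ≠ N → O n < O N := by
  have hEpos : ∀ x : ℝ, 0 < 1 + Real.exp (-a * (x - b)) := fun x => by positivity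
  -- derivative of F
  have hderivF : ∀ x, HasDerivAt F (a * F x * (1 - F x)) x := by
    intro x
    have h2 : HasDerivAt (fun x : ℝ => -a * (x - b)) (-a) x := by
      simpa using ((hasDerivAt_id x).sub_const b).const_mul (-a)
    have h1 : HasDerivAt (fun x : ℝ => 1 + Real.exp (-a * (x - b)))
        (Real.exp (-a * (x - b)) * (-a)) x := by
      simpa using (h2.exp.const_add 1)
    have h3 : HasDerivAt (fun x => (1 + Real.exp (-a * (x - b)))⁻¹)
        (-(Real.exp (-a * (x - b)) * -a) / (1 + Real.exp (-a * (x - b))) ^ 2) x := h1.inv (ne_of_gt (hEpos x))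
    have hFeq : F = fun x => (1 + Real.exp (-a * (x - b)))⁻¹ := by
      funext y; rw [hF y, one_div]
    rw [hFeq]
    convert h3 using 1
    have hpos := hEpos x
    simp only
    field_simp
    ring
  have hderivO : ∀ x, HasDerivAt O (α * a * F x * (1 - F x) - c) x := by
    intro x
    have hOeq : O = fun n => α * F n - c * n + Γ := funext hO
    rw [hOeq]
    have : HasDerivAt (fun n => α * F n - c * n + Γ) (α * (a * F x * (1 - F x)) - c * 1) x :=
      (((hderivF x).const_mul α).sub ((hasDerivAt_id x).const_mul c)).add_const Γ
    convert this using 1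
    ring
  -- basic facts about F on the interval
  have hFval : ∀ x, b < x → 1 / 2 < F x := by
    intro x hx
    rw [hF x]
    have hE1 : Real.exp (-a * (x - b)) < 1 := by
      rw [show (1 : ℝ) = Real.exp 0 by simp]
      apply Real.exp_lt_exp.mpr
      nlinarith
    rw [lt_div_iff₀ (hEpos x)]
    linarith
  have hFmono : ∀ x, x ≤ N → F x ≤ F N := by
    intro x hx
    rw [hF x, hF N]
    apply one_div_le_one_div_of_le (hEpos N)
    have : Real.exp (-a * (N - b)) ≤ Real.exp (-a * (x - b)) := by
      apply Real.exp_le_exp.mpr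
      nlinarith
    linarith
  -- key: the derivative is positive on [Nhat, N]
  have key : ∀ n ∈ Set.Icc Nhat N, c < α * a * F n * (1 - F n) := by
    intro n hn
    obtain ⟨hn1, hn2⟩ := hn
    have hhn : 1 / 2 < F n := hFval n (lt_of_lt_of_le hbN hn1)
    have hhN : 1 / 2 < F N := hFval N (by linarith)
    have hle : F n ≤ F N := hFmono n hn2
    have hprod : 0 ≤ (α * a) * ((F N - F n) * (F n + F N - 1)) := by
      apply mul_nonneg (mul_pos hα ha).le
      apply mul_nonneg (by linarith) (by linarith)
    nlinarith [hc, hprod]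
  have hderivpos : ∀ n ∈ Set.Icc Nhat N, 0 < deriv O n := by
    intro n hn
    rw [(hderivO n).deriv]
    have := key n hn
    linarith
  have hcont : Continuous O := by
    have : Differentiable ℝ O := fun x => (hderivO x).differentiableAt
    exact this.continuous
  have hmono : StrictMonoOn O (Set.Icc Nhat N) := by
    apply strictMonoOn_of_deriv_pos (convex_Icc _ _) hcont.continuousOn
    intro x hx
    exact hderivpos x (interior_subset hx)
  refine ⟨hderivpos, hmono, ?_⟩
  intro n hn hne
  exact hmono hn ⟨le_of_lt hNN, le_refl N⟩ (lt_of_le_of_ne hn.2 hne)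
end

section
/- If α·a·F(N̂)·(1 − F(N̂)) < c, then O'(n) < 0 for all n ∈ [N̂, N], O is strictly monotone decreasing on [N̂, N], and its unique maximizer on [N̂, N] is n* = N̂ (the maximum number of denoising steps is offloaded). -/
private lemma ratio_mono {t s : ℝ} (ht : 0 < t) (hts : t ≤ s) (hs1 : s < 1) :
    t / (1 + t)^2 ≤ s / (1 + s)^2 := by
  have h1 : (0:ℝ) < (1 + t)^2 := by nlinarith
  have h2 : (0:ℝ) < (1 + s)^2 := by nlinarith
  rw [div_le_div_iff₀ h1 h2]
  have h3 : t * s < 1 := by nlinarith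
  have h4 : (0:ℝ) ≤ (s - t) * (1 - t * s) :=
    mul_nonneg (by linarith) (by linarith)
  nlinarith

/-- If `α·a·F(N̂)·(1 − F(N̂)) < c`, then `O'(n) < 0` for all
`n ∈ [N̂, N]`, `O` is strictly monotone decreasing on `[N̂, N]`, and its unique
maximizer on `[N̂, N]` is `n* = N̂` (maximum number of denoising steps
offloaded). Here `O(n) = α·F(n) − c·n + Γ`, `F(x) = 1/(1 + exp(−a·(x − b)))`,
`a > 0`, `α > 0`, `b < N̂ < N`. -/
theorem deriv_neg_maximizer_at_Nhat (a b α c Γ Nhat N : ℝ)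
    (ha : 0 < a) (hα : 0 < α) (hbN : b < Nhat) (hNN : Nhat < N)
    (F O : ℝ → ℝ)
    (hF : ∀ x, F x = 1 / (1 + Real.exp (-a * (x - b))))
    (hO : ∀ n, O n = α * F n - c * n + Γ)
    (hc : α * a * F Nhat * (1 - F Nhat) < c) :
    (∀ n ∈ Set.Icc Nhat N, deriv O n < 0) ∧
      StrictAntiOn O (Set.Icc Nhat N) ∧
      ∀ n ∈ Set.Icc Nhat N, n ≠ Nhat → O n < O Nhat := by
  set E : ℝ → ℝ := fun x => Real.exp (-a * (x - b)) with hE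
  have hEpos : ∀ x, 0 < E x := fun x => Real.exp_pos _
  have hden : ∀ x, (1 + E x) ≠ 0 := fun x => by positivity
  -- derivative of O at any x
  have hOd : ∀ x, HasDerivAt O (α * (a * E x / (1 + E x)^2) - c) x := by
    intro x
    have h1 : HasDerivAt (fun t : ℝ => -a * (t - b)) (-a) x := by
      simpa using ((hasDerivAt_id x).sub_const b).const_mul (-a)
    have h2 : HasDerivAt E (E x * -a) x := by
      simpa [hE, Function.comp_def] using (Real.hasDerivAt_exp (-a * (x - b))).comp x h1
    have h3 : HasDerivAt (fun t => 1 + E t) (E x * -a) x := by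
      simpa using h2.const_add 1
    have h4 : HasDerivAt (fun t => (1 + E t)⁻¹)
        (-(E x * -a) / (1 + E x)^2) x := h3.inv (hden x)
    have hFd : HasDerivAt F (a * E x / (1 + E x)^2) x := by
      have : F = fun t => (1 + E t)⁻¹ := by
        funext t; rw [hF t, one_div]
      rw [this]
      convert h4 using 1; ring
    have : HasDerivAt (fun n => α * F n - c * n + Γ)
        (α * (a * E x / (1 + E x)^2) - c) x := by
      simpa using (((hFd.const_mul α).sub ((hasDerivAt_id x).const_mul c)).add_const Γ)
    have hOe : O = fun n => α * F n - c * n + Γ := funext hO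
    rw [hOe]; exact this
  -- value of F(N̂)(1−F(N̂))
  have key : ∀ u : ℝ, 0 < u → (1/(1+u)) * (1 - 1/(1+u)) = u/(1+u)^2 := by
    intro u hu
    have h0 : (1:ℝ) + u ≠ 0 := by positivity
    have h1 : 1 - 1/(1+u) = u/(1+u) := by field_simp; ring
    rw [h1, div_mul_div_comm, one_mul, sq]
  have hval : F Nhat * (1 - F Nhat) = E Nhat / (1 + E Nhat)^2 := by
    rw [hF Nhat]
    exact key _ (hEpos Nhat)
  have hE1 : E Nhat < 1 := by
    rw [hE]
    simp only
    rw [Real.exp_lt_one_iff]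
    nlinarith
  have hderivneg : ∀ n ∈ Set.Icc Nhat N, deriv O n < 0 := by
    intro n hn
    rw [(hOd n).deriv]
    have hle : E n ≤ E Nhat := by
      apply Real.exp_le_exp.2; nlinarith [hn.1]
    have := ratio_mono (hEpos n) hle hE1
    have hkey : α * (a * E n / (1 + E n)^2) ≤ α * a * F Nhat * (1 - F Nhat) :=
      calc α * (a * E n / (1 + E n)^2) = α * a * (E n / (1 + E n)^2) := by ring
        _ ≤ α * a * (E Nhat / (1 + E Nhat)^2) :=
            mul_le_mul_of_nonneg_left this (by positivity)
        _ = α * a * F Nhat * (1 - F Nhat) := by rw [← hval]; ring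
    linarith
  have hdiff : ∀ x, DifferentiableAt ℝ O x := fun x => (hOd x).differentiableAt
  have hanti : StrictAntiOn O (Set.Icc Nhat N) := by
    apply strictAntiOn_of_deriv_neg (convex_Icc _ _)
      (fun x _ => (hdiff x).continuousAt.continuousWithinAt)
    intro x hx
    rw [interior_Icc] at hx
    exact hderivneg x ⟨hx.1.le, hx.2.le⟩
  refine ⟨hderivneg, hanti, ?_⟩
  intro n hn hne
  exact hanti ⟨le_refl _, hNN.le⟩ hn (lt_of_le_of_ne hn.1 (Ne.symm hne))
end

section
/- If α·a·F(N)·(1 − F(N)) < c < α·a·F(N̂)·(1 − F(N̂)), then there exists a unique n* in the open interval (N̂, N) satisfying the stationarity condition α·a·F(n*)·(1 − F(n*)) = c, and this n* is the unique maximizer of O on [N̂, N], i.e., O(n*) > O(n) for every n ∈ [N̂, N] with n ≠ n*. -/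
open Set

private lemma logistic_hasDerivAt (a b x : ℝ) :
    HasDerivAt (fun x => 1 / (1 + Real.exp (-a * (x - b))))
      (a * (1 / (1 + Real.exp (-a * (x - b)))) *
        (1 - 1 / (1 + Real.exp (-a * (x - b))))) x := by
  have hE : (0:ℝ) < Real.exp (-a * (x - b)) := Real.exp_pos _
  have hd : 1 + Real.exp (-a * (x - b)) ≠ 0 := by positivity
  have h1 : HasDerivAt (fun x : ℝ => -a * (x - b)) (-a) x := by
    simpa using ((hasDerivAt_id x).sub_const b).const_mul (-a)
  have h4 := ((h1.exp).const_add 1).fun_inv hd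
  have h5 : HasDerivAt (fun x => 1 / (1 + Real.exp (-a * (x - b))))
      (-(Real.exp (-a * (x - b)) * -a) / (1 + Real.exp (-a * (x - b))) ^ 2) x := by
    simpa [one_div] using h4
  convert h5 using 1
  field_simp
  ring

/-- If `α·a·F(N)·(1 − F(N)) < c < α·a·F(N̂)·(1 − F(N̂))`, then
there exists a unique `n*` in the open interval `(N̂, N)` satisfying the
stationarity condition `α·a·F(n*)·(1 − F(n*)) = c`, and this `n*` is the unique
maximizer of `O` on `[N̂, N]`. Here `O(n) = α·F(n) − c·n + Γ`,
`F(x) = 1/(1 + exp(−a·(x − b)))`, `a > 0`, `α > 0`, `b < N̂ < N`. -/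
theorem interior_stationary_maximizer (a b α c Γ Nhat N : ℝ)
    (ha : 0 < a) (hα : 0 < α) (hbN : b < Nhat) (hNN : Nhat < N)
    (F O : ℝ → ℝ)
    (hF : ∀ x, F x = 1 / (1 + Real.exp (-a * (x - b))))
    (hO : ∀ n, O n = α * F n - c * n + Γ)
    (hc1 : α * a * F N * (1 - F N) < c)
    (hc2 : c < α * a * F Nhat * (1 - F Nhat)) :
    ∃! nstar : ℝ, nstar ∈ Set.Ioo Nhat N ∧
      α * a * F nstar * (1 - F nstar) = c ∧
      ∀ n ∈ Set.Icc Nhat N, n ≠ nstar → O n < O nstar := by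
  have hFeq : F = fun x => 1 / (1 + Real.exp (-a * (x - b))) := funext hF
  have hOeq : O = fun n => α * F n - c * n + Γ := funext hO
  have hFc : ∀ x : ℝ, (0:ℝ) < 1 + Real.exp (-a * (x - b)) := fun x => by positivity
  -- F strictly monotone
  have hFmono : StrictMono F := by
    intro x y hxy
    rw [hF x, hF y]
    apply one_div_lt_one_div_of_lt (hFc y)
    have h : -a * (y - b) < -a * (x - b) := by nlinarith
    linarith [Real.exp_lt_exp.2 h]
  -- F x < 1
  have hFlt1 : ∀ x, F x < 1 := by
    intro x
    rw [hF x, div_lt_one (hFc x)]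
    linarith [Real.exp_pos (-a * (x - b))]
  -- F x > 1/2 for x > b
  have hFhalf : ∀ x, b < x → 1/2 < F x := by
    intro x hx
    rw [hF x]
    have h1 : Real.exp (-a * (x - b)) < 1 := by
      rw [Real.exp_lt_one_iff]
      nlinarith
    rw [lt_div_iff₀ (hFc x)]
    nlinarith
  -- g strictly anti on (b, ∞)
  have hganti : ∀ x y, b < x → x < y →
      α * a * F y * (1 - F y) < α * a * F x * (1 - F x) := by
    intro x y hbx hxy
    have h1 : 1/2 < F x := hFhalf x hbx
    have h2 : F x < F y := hFmono hxy
    have h3 : F y < 1 := hFlt1 y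
    have key : 0 < (F y - F x) * (F x + F y - 1) :=
      mul_pos (by linarith) (by linarith)
    nlinarith [mul_pos (mul_pos hα ha) key]
  -- derivative of F
  have hFder : ∀ x, HasDerivAt F (a * F x * (1 - F x)) x := by
    intro x
    simpa [hFeq] using logistic_hasDerivAt a b x
  have hFcont : Continuous F := by
    refine continuous_iff_continuousAt.2 fun x => (hFder x).continuousAt
  -- derivative of O
  have hOder : ∀ x, HasDerivAt O (α * a * F x * (1 - F x) - c) x := by
    intro x
    have h1 := (hFder x).const_mul α
    have h2 := (hasDerivAt_id x).const_mul c
    have h3 := (h1.fun_sub h2).add_const Γ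
    rw [hOeq]
    refine h3.congr_deriv ?_
    ring
  have hOcont : Continuous O := by
    refine continuous_iff_continuousAt.2 fun x => (hOder x).continuousAt
  -- IVT
  have hgcont : Continuous fun x => α * a * F x * (1 - F x) :=
    (continuous_const.mul hFcont).mul (continuous_const.sub hFcont)
  have hmem : c ∈ Ioo (α * a * F N * (1 - F N)) (α * a * F Nhat * (1 - F Nhat)) :=
    ⟨hc1, hc2⟩
  obtain ⟨nstar, hns, hgns⟩ :=
    intermediate_value_Ioo' hNN.le hgcont.continuousOn hmem
  have hbns : b < nstar := lt_trans hbN hns.1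
  -- O strictly mono on [Nhat, nstar]
  have hMono : StrictMonoOn O (Icc Nhat nstar) := by
    apply strictMonoOn_of_deriv_pos (convex_Icc _ _) hOcont.continuousOn
    intro x hx
    rw [interior_Icc] at hx
    rw [(hOder x).deriv]
    have : c < α * a * F x * (1 - F x) := by
      rw [← hgns]
      exact hganti x nstar (lt_trans hbN hx.1) hx.2
    linarith
  -- O strictly anti on [nstar, N]
  have hAnti : StrictAntiOn O (Icc nstar N) := by
    apply strictAntiOn_of_deriv_neg (convex_Icc _ _) hOcont.continuousOn
    intro x hx
    rw [interior_Icc] at hx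
    rw [(hOder x).deriv]
    have : α * a * F x * (1 - F x) < c := by
      rw [← hgns]
      exact hganti nstar x hbns hx.1
    linarith
  have hmax : ∀ n ∈ Icc Nhat N, n ≠ nstar → O n < O nstar := by
    intro n hn hne
    rcases lt_or_gt_of_ne hne with h | h
    · exact hMono ⟨hn.1, h.le⟩ ⟨hns.1.le, le_refl _⟩ h
    · exact hAnti ⟨le_refl _, hns.2.le⟩ ⟨h.le, hn.2⟩ h
  refine ⟨nstar, ⟨hns, hgns, hmax⟩, ?_⟩
  rintro m ⟨hm, hgm, hmmax⟩
  by_contra hne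
  have h1 := hmax m ⟨hm.1.le, hm.2.le⟩ hne
  have h2 := hmmax nstar ⟨hns.1.le, hns.2.le⟩ (Ne.symm hne)
  linarith
end

section
/- (Remark, personalized trade-off regime) Suppose c > 0, F(N)·(1 − F(N)) > 0, F(N̂)·(1 − F(N̂)) > 0, and c/(a·F(N̂)·(1 − F(N̂))) < α < c/(a·F(N)·(1 − F(N))). Then the unique maximizer n* of O on [N̂, N] lies strictly in the open interval (N̂, N). -/
/-- Remark, personalized trade-off regime: Suppose `c > 0`,
`F(N)·(1 − F(N)) > 0`, `F(N̂)·(1 − F(N̂)) > 0`, and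
`c/(a·F(N̂)·(1 − F(N̂))) < α < c/(a·F(N)·(1 − F(N)))`. Then the unique
maximizer `n*` of `O` on `[N̂, N]` lies strictly in the open interval
`(N̂, N)`. Here `O(n) = α·F(n) − c·n + Γ`, `F(x) = 1/(1 + exp(−a·(x − b)))`,
`a > 0`, `α > 0`, `b < N̂ < N`. -/
theorem tradeoff_regime_interior_maximizer (a b α c Γ Nhat N : ℝ)
    (ha : 0 < a) (hα : 0 < α) (hbN : b < Nhat) (hNN : Nhat < N)
    (F O : ℝ → ℝ)
    (hF : ∀ x, F x = 1 / (1 + Real.exp (-a * (x - b))))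
    (hO : ∀ n, O n = α * F n - c * n + Γ)
    (hc : 0 < c)
    (hFN : 0 < F N * (1 - F N))
    (hFNhat : 0 < F Nhat * (1 - F Nhat))
    (hα1 : c / (a * F Nhat * (1 - F Nhat)) < α)
    (hα2 : α < c / (a * F N * (1 - F N))) :
    ∃ nstar : ℝ, nstar ∈ Set.Ioo Nhat N ∧
      ∀ n ∈ Set.Icc Nhat N, n ≠ nstar → O n < O nstar := by
  have hFfun : F = fun x => 1 / (1 + Real.exp (-a * (x - b))) := funext hF
  have hOfun : O = fun n => α * F n - c * n + Γ := funext hO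
  have hpos : ∀ x : ℝ, 0 < 1 + Real.exp (-a * (x - b)) := fun x => by positivity
  -- F is strictly monotone
  have hFmono : StrictMono F := by
    intro x y hxy
    rw [hF x, hF y]
    have h1 : Real.exp (-a * (y - b)) < Real.exp (-a * (x - b)) := by
      apply Real.exp_lt_exp.2; nlinarith
    rw [div_lt_div_iff₀ (hpos x) (hpos y)]
    nlinarith
  -- F values in (0,1)
  have hF0 : ∀ x, 0 < F x := by
    intro x; rw [hF x]; positivity
  have hF1 : ∀ x, F x < 1 := by
    intro x; rw [hF x, div_lt_one (hpos x)]
    nlinarith [Real.exp_pos (-a * (x - b))]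
  -- F x > 1/2 for x > b
  have hFhalf : ∀ x, b < x → 1 / 2 < F x := by
    intro x hx
    rw [hF x, div_lt_div_iff₀ (by norm_num) (hpos x)]
    have hlt : Real.exp (-a * (x - b)) < 1 := by
      rw [Real.exp_lt_one_iff]; nlinarith
    nlinarith
  -- derivative of F
  have hFderiv : ∀ x, HasDerivAt F (a * (F x * (1 - F x))) x := by
    intro x
    have h1 : HasDerivAt (fun x : ℝ => -a * (x - b)) (-a) x := by
      simpa using ((hasDerivAt_id x).sub_const b).const_mul (-a)
    have h2 := h1.exp
    have h3 : HasDerivAt (fun x : ℝ => 1 + Real.exp (-a * (x - b)))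
        (Real.exp (-a * (x - b)) * (-a)) x := h2.const_add 1
    have h4 := h3.inv (ne_of_gt (hpos x))
    have heq : a * (F x * (1 - F x)) =
        -(Real.exp (-a * (x - b)) * (-a)) / (1 + Real.exp (-a * (x - b))) ^ 2 := by
      rw [hF x]
      have h5 := hpos x
      field_simp
      ring
    have h4' : HasDerivAt F
        (-(Real.exp (-a * (x - b)) * -a) / (1 + Real.exp (-a * (x - b))) ^ 2) x := by
      rw [hFfun]; simp only [one_div]; exact h4
    exact heq ▸ h4'
  -- derivative of O
  have hOderiv : ∀ x, HasDerivAt O (α * (a * (F x * (1 - F x))) - c) x := by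
    intro x
    rw [hOfun]
    have := (((hFderiv x).const_mul α).sub ((hasDerivAt_id x).const_mul c)).add_const Γ
    simpa using this
  set φ : ℝ → ℝ := fun n => α * (a * (F n * (1 - F n))) - c with hφdef
  have hFdiff : Differentiable ℝ F := fun x => (hFderiv x).differentiableAt
  have hFcont : Continuous F := hFdiff.continuous
  have hφcont : Continuous φ :=
    (continuous_const.mul (continuous_const.mul
      (hFcont.mul (continuous_const.sub hFcont)))).sub continuous_const
  -- φ strictly antitone on [Nhat, N]
  have hφanti : StrictAntiOn φ (Set.Icc Nhat N) := by
    intro x hx y hy hxy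
    have hx2 : 1 / 2 < F x := hFhalf x (lt_of_lt_of_le hbN hx.1)
    have hxy2 : F x < F y := hFmono hxy
    have hy1 : F y < 1 := hF1 y
    have : F y * (1 - F y) < F x * (1 - F x) := by nlinarith
    have hαa : 0 < α * a := mul_pos hα ha
    simp only [hφdef]
    nlinarith
  -- signs of φ at endpoints
  have hgNhat : 0 < a * F Nhat * (1 - F Nhat) := by
    have := mul_pos ha hFNhat; nlinarith
  have hgN : 0 < a * F N * (1 - F N) := by
    have := mul_pos ha hFN; nlinarith
  have hφNhat : 0 < φ Nhat := by
    have := (div_lt_iff₀ hgNhat).1 hα1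
    simp only [hφdef]; nlinarith
  have hφN : φ N < 0 := by
    have := (lt_div_iff₀ hgN).1 hα2
    simp only [hφdef]; nlinarith
  -- IVT: zero of φ in (Nhat, N)
  obtain ⟨nstar, hns, hφns⟩ : ∃ n ∈ Set.Ioo Nhat N, φ n = 0 := by
    have h := intermediate_value_Ioo' (le_of_lt hNN) hφcont.continuousOn
      (Set.mem_Ioo.2 ⟨hφN, hφNhat⟩)
    obtain ⟨n, hn, hn0⟩ := h
    exact ⟨n, hn, hn0⟩
  have hOcont : Continuous O := by
    rw [hOfun]
    exact ((continuous_const.mul hFcont).sub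
      (continuous_const.mul continuous_id)).add continuous_const
  have hderivO : ∀ x, deriv O x = φ x := fun x => (hOderiv x).deriv
  -- O strictly monotone on [Nhat, nstar]
  have hmono : StrictMonoOn O (Set.Icc Nhat nstar) := by
    apply strictMonoOn_of_deriv_pos (convex_Icc _ _) hOcont.continuousOn
    intro x hx
    rw [interior_Icc] at hx
    rw [hderivO]
    have hx' : x ∈ Set.Icc Nhat N := ⟨le_of_lt hx.1, le_of_lt (lt_trans hx.2 hns.2)⟩
    have hns' : nstar ∈ Set.Icc Nhat N := ⟨le_of_lt hns.1, le_of_lt hns.2⟩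
    have := hφanti hx' hns' hx.2
    linarith [hφns ▸ this]
  -- O strictly antitone on [nstar, N]
  have hanti : StrictAntiOn O (Set.Icc nstar N) := by
    apply strictAntiOn_of_deriv_neg (convex_Icc _ _) hOcont.continuousOn
    intro x hx
    rw [interior_Icc] at hx
    rw [hderivO]
    have hx' : x ∈ Set.Icc Nhat N := ⟨le_of_lt (lt_trans hns.1 hx.1), le_of_lt hx.2⟩
    have hns' : nstar ∈ Set.Icc Nhat N := ⟨le_of_lt hns.1, le_of_lt hns.2⟩
    have := hφanti hns' hx' hx.1
    linarith [hφns ▸ this]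
  refine ⟨nstar, hns, fun n hn hne => ?_⟩
  rcases lt_or_gt_of_ne hne with h | h
  · exact hmono ⟨hn.1, le_of_lt h⟩ ⟨le_of_lt hns.1, le_refl _⟩ h
  · exact hanti ⟨le_refl _, le_of_lt hns.2⟩ ⟨le_of_lt h, hn.2⟩ h
end

section
/- (Monotone comparative statics in the emphasis weight) Suppose c > 0 and α₁ < α₂ are both in the interior regime, i.e., αⱼ·a·F(N)·(1 − F(N)) < c < αⱼ·a·F(N̂)·(1 − F(N̂)) for j = 1, 2, and let n*₁, n*₂ ∈ (N̂, N) be the corresponding unique solutions of αⱼ·a·F(n*ⱼ)·(1 − F(n*ⱼ)) = c. Then n*₁ < n*₂: a larger emphasis weight α on personalized accuracy yields a strictly larger optimal split point, i.e., strictly fewer offloaded denoising steps. -/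
set_option maxHeartbeats 800000


/-- Monotone comparative statics in the emphasis weight:
Suppose `c > 0` and `α₁ < α₂` are both in the interior regime, i.e.
`αⱼ·a·F(N)·(1 − F(N)) < c < αⱼ·a·F(N̂)·(1 − F(N̂))` for `j = 1, 2`, and let
`n*₁, n*₂ ∈ (N̂, N)` solve `αⱼ·a·F(n*ⱼ)·(1 − F(n*ⱼ)) = c`. Then `n*₁ < n*₂`:
a larger emphasis weight yields a strictly larger optimal split point, i.e.
strictly fewer offloaded denoising steps. Here
`F(x) = 1/(1 + exp(−a·(x − b)))`, `a > 0`, `b < N̂ < N`. -/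
theorem splitpoint_increasing_in_alpha (a b c Nhat N α₁ α₂ n₁ n₂ : ℝ)
    (ha : 0 < a) (hbN : b < Nhat) (hNN : Nhat < N) (hc : 0 < c)
    (hα₁ : 0 < α₁) (hα₂ : 0 < α₂) (hαlt : α₁ < α₂)
    (F : ℝ → ℝ)
    (hF : ∀ x, F x = 1 / (1 + Real.exp (-a * (x - b))))
    (hreg₁ : α₁ * a * F N * (1 - F N) < c ∧ c < α₁ * a * F Nhat * (1 - F Nhat))
    (hreg₂ : α₂ * a * F N * (1 - F N) < c ∧ c < α₂ * a * F Nhat * (1 - F Nhat))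
    (hn₁ : n₁ ∈ Set.Ioo Nhat N) (hn₂ : n₂ ∈ Set.Ioo Nhat N)
    (hstat₁ : α₁ * a * F n₁ * (1 - F n₁) = c)
    (hstat₂ : α₂ * a * F n₂ * (1 - F n₂) = c) :
    n₁ < n₂ := by
  by_contra h
  push_neg at h
  set t₁ := Real.exp (-a * (n₁ - b)) with ht₁def
  set t₂ := Real.exp (-a * (n₂ - b)) with ht₂def
  have hb₁ : b < n₁ := lt_trans hbN hn₁.1
  have hb₂ : b < n₂ := lt_trans hbN hn₂.1
  have ht₁pos : 0 < t₁ := Real.exp_pos _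
  have ht₂pos : 0 < t₂ := Real.exp_pos _
  have ht₁lt : t₁ < 1 := by
    rw [ht₁def, Real.exp_lt_one_iff]
    nlinarith
  have ht₂lt : t₂ < 1 := by
    rw [ht₂def, Real.exp_lt_one_iff]
    nlinarith
  have htle : t₁ ≤ t₂ := Real.exp_le_exp.mpr (by nlinarith)
  have hF₁ : F n₁ = 1 / (1 + t₁) := hF n₁
  have hF₂ : F n₂ = 1 / (1 + t₂) := hF n₂
  have h1t₁ : (0:ℝ) < 1 + t₁ := by linarith
  have h1t₂ : (0:ℝ) < 1 + t₂ := by linarith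
  -- rewrite stationarity in terms of t
  have key₁ : F n₁ * (1 - F n₁) = t₁ / (1 + t₁)^2 := by
    rw [hF₁]; field_simp; ring_nf
  have key₂ : F n₂ * (1 - F n₂) = t₂ / (1 + t₂)^2 := by
    rw [hF₂]; field_simp; ring_nf
  have hg₁ : α₁ * a * (t₁ / (1 + t₁)^2) = c := by
    rw [← key₁]; linear_combination hstat₁
  have hg₂ : α₂ * a * (t₂ / (1 + t₂)^2) = c := by
    rw [← key₂]; linear_combination hstat₂
  -- monotonicity: t₁ ≤ t₂ < 1 ⇒ t₁/(1+t₁)² ≤ t₂/(1+t₂)²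
  have hmono : t₁ / (1 + t₁)^2 ≤ t₂ / (1 + t₂)^2 := by
    rw [div_le_div_iff₀ (by positivity) (by positivity)]
    nlinarith [mul_nonneg (sub_nonneg.mpr htle) (sub_pos.mpr (show t₁ * t₂ < 1 by nlinarith)).le]
  have hgpos : 0 < t₂ / (1 + t₂)^2 := by positivity
  have hAa : α₁ * a < α₂ * a := by nlinarith
  have h1 : α₁ * a * (t₁ / (1 + t₁)^2) ≤ α₁ * a * (t₂ / (1 + t₂)^2) :=
    mul_le_mul_of_nonneg_left hmono (by positivity)
  have h2 : α₁ * a * (t₂ / (1 + t₂)^2) < α₂ * a * (t₂ / (1 + t₂)^2) :=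
    mul_lt_mul_of_pos_right hAa hgpos
  linarith
end

section
/- (Monotone comparative statics in the latency gap) Fix α > 0 and suppose 0 < c₁ < c₂ are both in the interior regime, i.e., α·a·F(N)·(1 − F(N)) < cⱼ < α·a·F(N̂)·(1 − F(N̂)) for j = 1, 2, and let n*₁, n*₂ ∈ (N̂, N) be the corresponding unique solutions of α·a·F(n*ⱼ)·(1 − F(n*ⱼ)) = cⱼ. Then n*₁ > n*₂: a larger gap between the local and edge per-denoising-step latencies yields a strictly smaller optimal split point, i.e., strictly more offloaded denoising steps. -/
lemma logistic_g_strictAnti (a b : ℝ) (ha : 0 < a) (F : ℝ → ℝ)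
    (hF : ∀ x, F x = 1 / (1 + Real.exp (-a * (x - b))))
    {x y : ℝ} (hx : b < x) (hxy : x < y) :
    F y * (1 - F y) < F x * (1 - F x) := by
  rw [hF x, hF y]
  set u := Real.exp (-a * (x - b)) with hu
  set v := Real.exp (-a * (y - b)) with hv
  have hu0 : 0 < u := Real.exp_pos _
  have hv0 : 0 < v := Real.exp_pos _
  have hu1 : u < 1 := by
    rw [hu, Real.exp_lt_one_iff]
    nlinarith
  have hvu : v < u := by
    rw [hu, hv, Real.exp_lt_exp]
    nlinarith
  have h1u : (0:ℝ) < 1 + u := by linarith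
  have h1v : (0:ℝ) < 1 + v := by linarith
  have huv : u * v < 1 := by nlinarith
  have key : (v - u) * (1 - u * v) < 0 :=
    mul_neg_of_neg_of_pos (by linarith) (by linarith)
  have e1 : 1/(1+u) * (1 - 1/(1+u)) = u/(1+u)^2 := by field_simp; ring_nf
  have e2 : 1/(1+v) * (1 - 1/(1+v)) = v/(1+v)^2 := by field_simp; ring_nf
  rw [e1, e2, div_lt_div_iff₀ (by positivity) (by positivity)]
  nlinarith [key]

/-- Monotone comparative statics in the latency gap: Fix
`α > 0` and suppose `0 < c₁ < c₂` are both in the interior regime, i.e.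
`α·a·F(N)·(1 − F(N)) < cⱼ < α·a·F(N̂)·(1 − F(N̂))` for `j = 1, 2`, and let
`n*₁, n*₂ ∈ (N̂, N)` solve `α·a·F(n*ⱼ)·(1 − F(n*ⱼ)) = cⱼ`. Then `n*₁ > n*₂`:
a larger latency gap yields a strictly smaller optimal split point, i.e.
strictly more offloaded denoising steps. Here
`F(x) = 1/(1 + exp(−a·(x − b)))`, `a > 0`, `b < N̂ < N`. -/
theorem splitpoint_decreasing_in_latency_gap (a b α Nhat N c₁ c₂ n₁ n₂ : ℝ)
    (ha : 0 < a) (hα : 0 < α) (hbN : b < Nhat) (hNN : Nhat < N)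
    (hc₁ : 0 < c₁) (hclt : c₁ < c₂)
    (F : ℝ → ℝ)
    (hF : ∀ x, F x = 1 / (1 + Real.exp (-a * (x - b))))
    (hreg₁ : α * a * F N * (1 - F N) < c₁ ∧ c₁ < α * a * F Nhat * (1 - F Nhat))
    (hreg₂ : α * a * F N * (1 - F N) < c₂ ∧ c₂ < α * a * F Nhat * (1 - F Nhat))
    (hn₁ : n₁ ∈ Set.Ioo Nhat N) (hn₂ : n₂ ∈ Set.Ioo Nhat N)
    (hstat₁ : α * a * F n₁ * (1 - F n₁) = c₁)
    (hstat₂ : α * a * F n₂ * (1 - F n₂) = c₂) :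
    n₂ < n₁ := by
  by_contra h
  push_neg at h
  rcases lt_or_eq_of_le h with h' | h'
  · have := logistic_g_strictAnti a b ha F hF (lt_trans hbN hn₁.1) h'
    nlinarith [mul_pos hα ha]
  · rw [h'] at hstat₁
    linarith
end
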